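/- arXiv:1407.4057 — 5 statements merged into one kernel-verified Lean document; each statement's English description precedes it below -/
import Mathlib

section
/- Let P and Q be rational polynomials of the same degree with positive leading coefficients r(P) and r(Q). Then P ⪯ Q (i.e., P(n)/P(m) ≤ Q(n)/Q(m) for m >> n >> 0) if and only if P(x)/r(P) ≤ Q(x)/r(Q) for all sufficiently large x. -/
open Filter Topology Polynomial

private lemma aux_eventually_pos (P : Polynomial ℚ) (hP : 0 < P.leadingCoeff) :
    ∀ᶠ x : ℚ in atTop, 0 < P.eval x := by
  rcases le_or_gt P.degree 0 with h | h
  · have hPe : P = Polynomial.C (P.coeff 0) := Polynomial.eq_C_of_degree_le_zero h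
    have h0 : 0 < P.coeff 0 := by
      have := hP; rw [hPe] at this; simpa using this
    filter_upwards with x
    rw [hPe]; simpa using h0
  · exact (P.tendsto_atTop_of_leadingCoeff_nonneg h hP.le).eventually_gt_atTop 0

/-- For rational polynomials `P`, `Q` of the same degree with positive leading
coefficients, `P ⪯ Q` in Rudakov's ordering (i.e. `P(n)/P(m) ≤ Q(n)/Q(m)` for
`m ≫ n ≫ 0`) iff the reduced polynomials satisfy `P/r(P) ≤ Q/r(Q)` eventually. -/
theorem stmt_1 (P Q : Polynomial ℚ) (hP : 0 < P.leadingCoeff) (hQ : 0 < Q.leadingCoeff)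
    (hdeg : P.degree = Q.degree) :
    (∃ N₀ : ℕ, ∀ n ≥ N₀, ∃ M ≥ n, ∀ m ≥ M,
        P.eval (n : ℚ) / P.eval (m : ℚ) ≤ Q.eval (n : ℚ) / Q.eval (m : ℚ)) ↔
    (∃ N : ℕ, ∀ x ≥ N, P.eval (x : ℚ) / P.leadingCoeff ≤ Q.eval (x : ℚ) / Q.leadingCoeff) := by
  -- eventual positivity along the naturals
  have hpos : ∀ᶠ n : ℕ in atTop, 0 < P.eval (n : ℚ) ∧ 0 < Q.eval (n : ℚ) :=
    tendsto_natCast_atTop_atTop.eventually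
      ((aux_eventually_pos P hP).and (aux_eventually_pos Q hQ))
  obtain ⟨N₁, hN₁⟩ := eventually_atTop.mp hpos
  -- the key limits
  have LQP : Tendsto (fun m : ℕ => Q.eval (m : ℚ) / P.eval (m : ℚ)) atTop
      (𝓝 (Q.leadingCoeff / P.leadingCoeff)) :=
    (Polynomial.div_tendsto_leadingCoeff_div_of_degree_eq Q P hdeg.symm).comp
      tendsto_natCast_atTop_atTop
  have LPQ : Tendsto (fun m : ℕ => P.eval (m : ℚ) / Q.eval (m : ℚ)) atTop
      (𝓝 (P.leadingCoeff / Q.leadingCoeff)) :=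
    (Polynomial.div_tendsto_leadingCoeff_div_of_degree_eq P Q hdeg).comp
      tendsto_natCast_atTop_atTop
  constructor
  · rintro ⟨N₀, h⟩
    refine ⟨max N₀ N₁, fun x hx => ?_⟩
    obtain ⟨M, hMx, hM⟩ := h x (le_trans (le_max_left _ _) hx)
    have hx1 : N₁ ≤ x := le_trans (le_max_right _ _) hx
    have hPx : 0 < P.eval (x : ℚ) := (hN₁ x hx1).1
    have key : P.eval (x : ℚ) * (Q.leadingCoeff / P.leadingCoeff) ≤ Q.eval (x : ℚ) := by
      refine le_of_tendsto (LQP.const_mul _) ?_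
      filter_upwards [eventually_ge_atTop (max M N₁)] with m hm
      have hmM : M ≤ m := le_trans (le_max_left _ _) hm
      have hm1 : N₁ ≤ m := le_trans (le_max_right _ _) hm
      have hPm : 0 < P.eval (m : ℚ) := (hN₁ m hm1).1
      have hQm : 0 < Q.eval (m : ℚ) := (hN₁ m hm1).2
      have hquot := hM m hmM
      rw [div_le_div_iff₀ hPm hQm] at hquot
      calc P.eval (x : ℚ) * (Q.eval (m : ℚ) / P.eval (m : ℚ))
          = P.eval (x : ℚ) * Q.eval (m : ℚ) / P.eval (m : ℚ) := (mul_div_assoc _ _ _).symm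
        _ ≤ Q.eval (x : ℚ) := (div_le_iff₀ hPm).2 hquot
    rw [div_le_div_iff₀ hP hQ]
    have key' : P.eval (x : ℚ) * Q.leadingCoeff / P.leadingCoeff ≤ Q.eval (x : ℚ) := by
      rw [mul_div_assoc]; exact key
    have := (div_le_iff₀ hP).1 key'
    linarith
  · rintro ⟨N, h⟩
    set D : Polynomial ℚ := Polynomial.C P.leadingCoeff * Q - Polynomial.C Q.leadingCoeff * P
      with hDdef
    have hevalD : ∀ y : ℚ, D.eval y = P.leadingCoeff * Q.eval y - Q.leadingCoeff * P.eval y := by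
      intro y; simp [hDdef]
    by_cases hD0 : D = 0
    · -- P and Q are proportional: ratios are equal
      refine ⟨0, fun n _ => ⟨n, le_refl n, fun m _ => ?_⟩⟩
      have e : ∀ y : ℚ, Q.eval y = (Q.leadingCoeff / P.leadingCoeff) * P.eval y := by
        intro y
        have h0 := hevalD y
        rw [hD0] at h0
        simp only [Polynomial.eval_zero] at h0
        field_simp
        linarith
      rw [e (n : ℚ), e (m : ℚ), mul_div_mul_left _ _ (div_pos hQ hP).ne']
    · -- D has finitely many natural roots; beyond them p < q strictly
      have hfin : {n : ℕ | D.eval (n : ℚ) = 0}.Finite := by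
        have : {n : ℕ | D.eval (n : ℚ) = 0} = (fun n : ℕ => (n : ℚ)) ⁻¹' {x | D.IsRoot x} := rfl
        rw [this]
        exact (Polynomial.finite_setOf_isRoot hD0).preimage Nat.cast_injective.injOn
      obtain ⟨B, hB⟩ := hfin.bddAbove
      refine ⟨max (B + 1) (max N N₁), fun n hn => ?_⟩
      have hnB : B + 1 ≤ n := le_trans (le_max_left _ _) hn
      have hnN : N ≤ n := le_trans (le_trans (le_max_left _ _) (le_max_right _ _)) hn
      have hn1 : N₁ ≤ n := le_trans (le_trans (le_max_right _ _) (le_max_right _ _)) hn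
      have hPn : 0 < P.eval (n : ℚ) := (hN₁ n hn1).1
      have hQn : 0 < Q.eval (n : ℚ) := (hN₁ n hn1).2
      have hDn0 : D.eval (n : ℚ) ≠ 0 := by
        intro hz
        have : n ≤ B := hB hz
        omega
      have hDnpos : 0 < D.eval (n : ℚ) := by
        have hle := h n hnN
        rw [div_le_div_iff₀ hP hQ] at hle
        rw [hevalD]
        have : 0 ≤ D.eval (n : ℚ) := by rw [hevalD]; linarith
        rcases this.lt_or_eq with hlt | heq
        · rw [hevalD] at hlt; exact hlt
        · exact absurd heq.symm hDn0
      have hlt : P.eval (n : ℚ) / Q.eval (n : ℚ) < P.leadingCoeff / Q.leadingCoeff := by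
        rw [div_lt_div_iff₀ hQn hQ]
        rw [hevalD] at hDnpos
        linarith
      have hev : ∀ᶠ m : ℕ in atTop,
          (P.eval (n : ℚ) / Q.eval (n : ℚ) < P.eval (m : ℚ) / Q.eval (m : ℚ)) ∧ N₁ ≤ m :=
        (LPQ.eventually (eventually_gt_nhds hlt)).and (eventually_ge_atTop N₁)
      obtain ⟨M, hM⟩ := eventually_atTop.mp hev
      refine ⟨max M n, le_max_right _ _, fun m hm => ?_⟩
      have hmM : M ≤ m := le_trans (le_max_left _ _) hm
      obtain ⟨hratio, hm1⟩ := hM m hmM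
      have hPm : 0 < P.eval (m : ℚ) := (hN₁ m hm1).1
      have hQm : 0 < Q.eval (m : ℚ) := (hN₁ m hm1).2
      rw [div_lt_div_iff₀ hQn hQm] at hratio
      rw [div_le_div_iff₀ hPm hQm]
      linarith
end

section
/- Let P(x) = p₁x + p₀ and Q(x) = q₁x + q₀ be polynomials of degree at most 1 with rational coefficients and p₁ > 0, q₁ > 0. Then P(n)/P(m) ≤ Q(n)/Q(m) holds for all m > n sufficiently large if and only if p₁q₀ − q₁p₀ ≥ 0. -/
/-- For linear polynomials `P(x) = p₁x + p₀`, `Q(x) = q₁x + q₀` with positive leading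
coefficients, `P(n)/P(m) ≤ Q(n)/Q(m)` for all sufficiently large `m > n` iff
`p₁q₀ − q₁p₀ ≥ 0`. -/
theorem stmt_2 (p₁ p₀ q₁ q₀ : ℚ) (hp : 0 < p₁) (hq : 0 < q₁) :
    (∃ N : ℕ, ∀ n m : ℕ, N ≤ n → n < m →
        (p₁ * n + p₀) / (p₁ * m + p₀) ≤ (q₁ * n + q₀) / (q₁ * m + q₀)) ↔
    0 ≤ p₁ * q₀ - q₁ * p₀ := by
  obtain ⟨K, hK⟩ := exists_nat_gt (max (-p₀ / p₁) (-q₀ / q₁))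
  have hPpos : ∀ n : ℕ, K ≤ n → 0 < p₁ * n + p₀ := by
    intro n hn
    have h1 : (-p₀ / p₁ : ℚ) < n := lt_of_lt_of_le (lt_of_le_of_lt (le_max_left _ _) hK)
      (by exact_mod_cast Nat.cast_le.mpr hn)
    have := (div_lt_iff₀ hp).mp h1
    linarith
  have hQpos : ∀ n : ℕ, K ≤ n → 0 < q₁ * n + q₀ := by
    intro n hn
    have h1 : (-q₀ / q₁ : ℚ) < n := lt_of_lt_of_le (lt_of_le_of_lt (le_max_right _ _) hK)
      (by exact_mod_cast Nat.cast_le.mpr hn)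
    have := (div_lt_iff₀ hq).mp h1
    linarith
  constructor
  · rintro ⟨N, hN⟩
    have hn : N ≤ N + K := Nat.le_add_right _ _
    have hk : K ≤ N + K := Nat.le_add_left _ _
    have hk' : K ≤ N + K + 1 := Nat.le_succ_of_le hk
    have h := hN (N + K) (N + K + 1) hn (Nat.lt_succ_self _)
    have hp1 := hPpos (N + K) hk
    have hp2 := hPpos (N + K + 1) hk'
    have hq1 := hQpos (N + K) hk
    have hq2 := hQpos (N + K + 1) hk'
    rw [div_le_div_iff₀ hp2 hq2] at h
    push_cast at h hp1 hp2 hq1 hq2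
    nlinarith [h, hp1, hq1]
  · intro hl
    refine ⟨K, fun n m hn hnm => ?_⟩
    have hm : K ≤ m := le_trans hn (le_of_lt hnm)
    have hp2 := hPpos m hm
    have hq2 := hQpos m hm
    rw [div_le_div_iff₀ hp2 hq2]
    have hmn : (n : ℚ) ≤ m := by exact_mod_cast Nat.cast_le.mpr (le_of_lt hnm)
    nlinarith [mul_nonneg hl (sub_nonneg.mpr hmn)]
end

section
/- Let d ≥ 0, let P₀, …, P_d be positive reals, and let a₀, …, a_d and b₀, …, b_d be positive reals. Define θ_i := Σ_{j<i} P_j − Σ_{j>i} P_j and α_i := Σ_{j<i} P_j + Σ_{j>i} P_j, and set θ(a) = Σ_i θ_i a_i, α(a) = Σ_i α_i a_i (similarly for b). If a_j/a_i ≤ b_j/b_i for all j < i, then θ(a)/α(a) ≥ θ(b)/α(b). -/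
open Finset

private lemma swap_zero (S : Finset ℕ) (u : ℕ → ℕ → ℝ) :
    ∑ i ∈ S, ∑ k ∈ S, (u i k - u k i) = 0 := by
  simp only [Finset.sum_sub_distrib]
  rw [sub_eq_zero]
  exact Finset.sum_comm

private lemma aux_key (d : ℕ) (A B a b : ℕ → ℝ)
    (hcross : ∀ j i : ℕ, j < i → i ≤ d → A j * B i ≤ A i * B j)
    (hyp : ∀ j i : ℕ, j < i → i ≤ d → a j * b i ≤ b j * a i) :
    (∑ i ∈ Finset.range (d+1), (A i - B i) * b i) *
      (∑ i ∈ Finset.range (d+1), (A i + B i) * a i) ≤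
    (∑ i ∈ Finset.range (d+1), (A i - B i) * a i) *
      (∑ i ∈ Finset.range (d+1), (A i + B i) * b i) := by
  rw [← sub_nonneg]
  have key : (∑ i ∈ Finset.range (d+1), (A i - B i) * a i) *
      (∑ i ∈ Finset.range (d+1), (A i + B i) * b i) -
      (∑ i ∈ Finset.range (d+1), (A i - B i) * b i) *
      (∑ i ∈ Finset.range (d+1), (A i + B i) * a i)
      = ∑ i ∈ Finset.range (d+1), ∑ k ∈ Finset.range (d+1),
          (A i * B k - A k * B i) * (a i * b k - a k * b i) := by
    rw [Finset.sum_mul_sum, Finset.sum_mul_sum]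
    rw [show (∑ i ∈ Finset.range (d+1), ∑ k ∈ Finset.range (d+1),
        ((A i - B i) * b i * ((A k + B k) * a k)))
        = ∑ i ∈ Finset.range (d+1), ∑ k ∈ Finset.range (d+1),
          ((A k - B k) * b k * ((A i + B i) * a i)) from Finset.sum_comm]
    simp only [← Finset.sum_sub_distrib]
    rw [← sub_eq_zero]
    simp only [← Finset.sum_sub_distrib]
    have h0 := swap_zero (Finset.range (d+1))
      (fun i k => A i * B k * (a i * b k + a k * b i))
    rw [← h0]
    refine Finset.sum_congr rfl fun i _ => Finset.sum_congr rfl fun k _ => ?_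
    ring
  rw [key]
  refine Finset.sum_nonneg fun i hi => Finset.sum_nonneg fun k hk => ?_
  have hi' : i ≤ d := Nat.lt_succ_iff.mp (Finset.mem_range.mp hi)
  have hk' : k ≤ d := Nat.lt_succ_iff.mp (Finset.mem_range.mp hk)
  rcases lt_trichotomy i k with h | h | h
  · have h1 : a i * b k - a k * b i ≤ 0 := by
      have := hyp i k h hk'; linarith
    have h2 : A i * B k - A k * B i ≤ 0 := by
      have := hcross i k h hk'; linarith
    nlinarith [mul_nonneg (neg_nonneg.2 h2) (neg_nonneg.2 h1)]
  · subst h; ring_nf; simp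
  · have h1 : 0 ≤ a i * b k - a k * b i := by
      have := hyp k i h hi'; linarith
    have h2 : 0 ≤ A i * B k - A k * B i := by
      have := hcross k i h hi'; linarith
    exact mul_nonneg h2 h1

/-- Multi-vertex slope comparison: with `θ_i = Σ_{j<i} P_j − Σ_{j>i} P_j` and
`α_i = Σ_{j<i} P_j + Σ_{j>i} P_j`, if `a_j/a_i ≤ b_j/b_i` for all `j < i`, then
`θ(a)/α(a) ≥ θ(b)/α(b)`. -/
theorem stmt_7 (d : ℕ) (hd : 1 ≤ d) (P a b : ℕ → ℝ)
    (hP : ∀ i ≤ d, 0 < P i) (ha : ∀ i ≤ d, 0 < a i) (hb : ∀ i ≤ d, 0 < b i)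
    (hyp : ∀ j i : ℕ, j < i → i ≤ d → a j / a i ≤ b j / b i) :
    (∑ i ∈ Finset.range (d + 1),
        ((∑ j ∈ Finset.range i, P j) - ∑ j ∈ Finset.Ioc i d, P j) * a i) /
      (∑ i ∈ Finset.range (d + 1),
        ((∑ j ∈ Finset.range i, P j) + ∑ j ∈ Finset.Ioc i d, P j) * a i) ≥
    (∑ i ∈ Finset.range (d + 1),
        ((∑ j ∈ Finset.range i, P j) - ∑ j ∈ Finset.Ioc i d, P j) * b i) /
      (∑ i ∈ Finset.range (d + 1),
        ((∑ j ∈ Finset.range i, P j) + ∑ j ∈ Finset.Ioc i d, P j) * b i) := by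
  have hA0 : ∀ i ≤ d, (0:ℝ) ≤ ∑ j ∈ Finset.range i, P j := fun i hi =>
    Finset.sum_nonneg fun j hj =>
      (hP j (le_trans (Nat.le_of_lt_succ (Nat.lt_succ_of_lt (Finset.mem_range.mp hj))) hi)).le
  have hB0 : ∀ i, (0:ℝ) ≤ ∑ j ∈ Finset.Ioc i d, P j := fun i =>
    Finset.sum_nonneg fun j hj => (hP j (Finset.mem_Ioc.mp hj).2).le
  have hαpos : ∀ c : ℕ → ℝ, (∀ i ≤ d, 0 < c i) →
      0 < ∑ i ∈ Finset.range (d + 1),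
        ((∑ j ∈ Finset.range i, P j) + ∑ j ∈ Finset.Ioc i d, P j) * c i := by
    intro c hc
    refine Finset.sum_pos' (fun i hi => ?_) ⟨0, Finset.mem_range.mpr (Nat.succ_pos d), ?_⟩
    · have hi' : i ≤ d := Nat.lt_succ_iff.mp (Finset.mem_range.mp hi)
      exact mul_nonneg (add_nonneg (hA0 i hi') (hB0 i)) (hc i hi').le
    · refine mul_pos ?_ (hc 0 (Nat.zero_le d))
      simp only [Finset.range_zero, Finset.sum_empty, zero_add]
      exact Finset.sum_pos (fun j hj => hP j (Finset.mem_Ioc.mp hj).2)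
        (Finset.nonempty_Ioc.mpr hd)
  rw [ge_iff_le, div_le_div_iff₀ (hαpos b hb) (hαpos a ha)]
  refine aux_key d (fun i => ∑ j ∈ Finset.range i, P j)
    (fun i => ∑ j ∈ Finset.Ioc i d, P j) a b ?_ ?_
  · intro j i hji hid
    have hAm : (∑ k ∈ Finset.range j, P k) ≤ ∑ k ∈ Finset.range i, P k := by
      refine Finset.sum_le_sum_of_subset_of_nonneg
        (Finset.range_subset_range.mpr hji.le) fun k hk _ => ?_
      exact (hP k (le_trans (Nat.le_of_lt_succ (Nat.lt_succ_of_lt (Finset.mem_range.mp hk))) hid)).le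
    have hBm : (∑ k ∈ Finset.Ioc i d, P k) ≤ ∑ k ∈ Finset.Ioc j d, P k := by
      refine Finset.sum_le_sum_of_subset_of_nonneg
        (Finset.Ioc_subset_Ioc_left hji.le) fun k hk _ => ?_
      exact (hP k (Finset.mem_Ioc.mp hk).2).le
    calc (∑ k ∈ Finset.range j, P k) * ∑ k ∈ Finset.Ioc i d, P k
        ≤ (∑ k ∈ Finset.range i, P k) * ∑ k ∈ Finset.Ioc i d, P k :=
          mul_le_mul_of_nonneg_right hAm (hB0 i)
      _ ≤ (∑ k ∈ Finset.range i, P k) * ∑ k ∈ Finset.Ioc j d, P k :=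
          mul_le_mul_of_nonneg_left hBm (hA0 i hid)
  · intro j i hji hid
    exact (div_le_div_iff₀ (ha i hid) (hb i hid)).mp (hyp j i hji hid)
end

section
/- Every finite-dimensional representation W of a quiver Q over a field k admits a unique Harder–Narasimhan filtration with respect to (θ, α): a filtration 0 = W⁽⁰⁾ ⊂ W⁽¹⁾ ⊂ … ⊂ W⁽ˢ⁾ = W by subrepresentations such that each quotient W_i = W⁽ⁱ⁾/W⁽ⁱ⁻¹⁾ is (θ,α)-semistable and θ(W₁)/α(W₁) < θ(W₂)/α(W₂) < … < θ(W_s)/α(W_s). -/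
set_option linter.unusedSectionVars false
set_option linter.unusedVariables false
set_option maxHeartbeats 1000000


open Module

/-- `U` is a subrepresentation of the representation `(W, φ)` of the quiver with
arrows `A`, source map `s` and target map `t`. -/
def IsSubrep {k V A : Type} [Field k] (s t : A → V) {W : V → Type}
    [∀ v, AddCommGroup (W v)] [∀ v, Module k (W v)]
    (φ : ∀ a : A, W (s a) →ₗ[k] W (t a)) (U : ∀ v, Submodule k (W v)) : Prop :=
  ∀ a : A, ∀ x ∈ U (s a), φ a x ∈ U (t a)

/-- The slope `θ/α` of the subquotient `U/U'` (for `U' ≤ U`), computed from the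
dimension vector `(dim U_v − dim U'_v)_v`. -/
noncomputable def subqSlope {k V : Type} [Field k] [Fintype V] (θ α : V → ℤ) {W : V → Type}
    [∀ v, AddCommGroup (W v)] [∀ v, Module k (W v)]
    (U' U : ∀ v, Submodule k (W v)) : ℚ :=
  (∑ v, (θ v : ℚ) * ((finrank k (U v) : ℚ) - (finrank k (U' v) : ℚ))) /
    (∑ v, (α v : ℚ) * ((finrank k (U v) : ℚ) - (finrank k (U' v) : ℚ)))

/-- The subquotient `U/U'` is `(θ,α)`-semistable: every nonzero subrepresentation
`T/U'` (with `U' ≤ T ≤ U` and `T` a subrepresentation) has slope at least that of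
`U/U'`. -/
def QuotSemistable {k V A : Type} [Field k] [Fintype V] (s t : A → V) (θ α : V → ℤ)
    {W : V → Type} [∀ v, AddCommGroup (W v)] [∀ v, Module k (W v)]
    (φ : ∀ a : A, W (s a) →ₗ[k] W (t a)) (U' U : ∀ v, Submodule k (W v)) : Prop :=
  ∀ T : ∀ v, Submodule k (W v), IsSubrep s t φ T → (∀ v, U' v ≤ T v) →
    (∀ v, T v ≤ U v) → (∃ v, T v ≠ U' v) →
    subqSlope θ α U' T ≥ subqSlope θ α U' U

/-- The `θ`-weighted dimension count of the subquotient `U/U'`. -/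
noncomputable def thQ {k V : Type} [Field k] [Fintype V] (θ : V → ℤ) {W : V → Type}
    [∀ v, AddCommGroup (W v)] [∀ v, Module k (W v)]
    (U' U : ∀ v, Submodule k (W v)) : ℚ :=
  ∑ v, (θ v : ℚ) * ((finrank k (U v) : ℚ) - (finrank k (U' v) : ℚ))

section Infra

variable {k V A : Type} [Field k] [Fintype V] {W : V → Type}
  [∀ v, AddCommGroup (W v)] [∀ v, Module k (W v)] [∀ v, FiniteDimensional k (W v)]

lemma subqSlope_eq (θ α : V → ℤ) (U' U : ∀ v, Submodule k (W v)) :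
    subqSlope θ α U' U = thQ θ U' U / thQ α U' U := rfl

lemma thQ_add (θ : V → ℤ) (U' T U : ∀ v, Submodule k (W v)) :
    thQ θ U' U = thQ θ U' T + thQ (W := W) θ T U := by
  unfold thQ
  rw [← Finset.sum_add_distrib]
  exact Finset.sum_congr rfl fun v _ => by ring

lemma alQ_nonneg {α : V → ℤ} (hα : ∀ v, 0 < α v) {U' U : ∀ v, Submodule k (W v)}
    (h : ∀ v, U' v ≤ U v) : 0 ≤ thQ α U' U := by
  refine Finset.sum_nonneg fun v _ => mul_nonneg ?_ ?_
  · exact_mod_cast (hα v).le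
  · have := Submodule.finrank_mono (h v)
    have h2 : (finrank k (U' v) : ℚ) ≤ (finrank k (U v) : ℚ) := by exact_mod_cast this
    linarith

lemma alQ_pos {α : V → ℤ} (hα : ∀ v, 0 < α v) {U' U : ∀ v, Submodule k (W v)}
    (h : ∀ v, U' v ≤ U v) (hne : ∃ v, U' v ≠ U v) : 0 < thQ α U' U := by
  obtain ⟨v0, hv0⟩ := hne
  refine Finset.sum_pos' (fun v _ => ?_) ⟨v0, Finset.mem_univ _, ?_⟩
  · refine mul_nonneg ?_ ?_
    · exact_mod_cast (hα v).le
    · have := Submodule.finrank_mono (h v)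
      have h2 : (finrank k (U' v) : ℚ) ≤ (finrank k (U v) : ℚ) := by exact_mod_cast this
      linarith
  · have hlt := Submodule.finrank_lt_finrank_of_lt (lt_of_le_of_ne (h v0) hv0)
    have h2 : (finrank k (U' v0) : ℚ) < (finrank k (U v0) : ℚ) := by exact_mod_cast hlt
    have h3 : (0 : ℚ) < (α v0 : ℚ) := by exact_mod_cast hα v0
    nlinarith

lemma dim_lt {U' U : ∀ v, Submodule k (W v)}
    (h : ∀ v, U' v ≤ U v) (hne : ∃ v, U' v ≠ U v) :
    ∑ v, finrank k (U' v) < ∑ v, finrank k (U v) := by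
  obtain ⟨v0, hv0⟩ := hne
  exact Finset.sum_lt_sum (fun v _ => Submodule.finrank_mono (h v))
    ⟨v0, Finset.mem_univ _, Submodule.finrank_lt_finrank_of_lt (lt_of_le_of_ne (h v0) hv0)⟩

lemma thQ_inf_sup (θ : V → ℤ) (T F : ∀ v, Submodule k (W v)) :
    thQ θ (fun v => T v ⊓ F v) T = thQ θ F (fun v => T v ⊔ F v) := by
  unfold thQ
  refine Finset.sum_congr rfl fun v _ => ?_
  beta_reduce
  have h := Submodule.finrank_sup_add_finrank_inf_eq (T v) (F v)
  qify at h
  linear_combination (-(θ v : ℚ)) * h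

variable {s t : A → V} {φ : ∀ a : A, W (s a) →ₗ[k] W (t a)}

lemma isSubrep_inf {T F : ∀ v, Submodule k (W v)} (hT : IsSubrep s t φ T)
    (hF : IsSubrep s t φ F) : IsSubrep s t φ (fun v => T v ⊓ F v) := by
  intro a x hx
  exact ⟨hT a x hx.1, hF a x hx.2⟩

lemma isSubrep_sup {T F : ∀ v, Submodule k (W v)} (hT : IsSubrep s t φ T)
    (hF : IsSubrep s t φ F) : IsSubrep s t φ (fun v => T v ⊔ F v) := by
  intro a x hx
  obtain ⟨y, hy, z, hz, rfl⟩ := Submodule.mem_sup.mp hx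
  rw [map_add]
  exact Submodule.add_mem _ (Submodule.mem_sup_left (hT a y hy))
    (Submodule.mem_sup_right (hF a z hz))

lemma isSubrep_bot : IsSubrep s t φ (fun _ => (⊥ : Submodule k _)) := by
  intro a x hx
  simp only [Submodule.mem_bot] at *
  rw [hx, map_zero]

lemma isSubrep_top : IsSubrep s t φ (fun _ => (⊤ : Submodule k _)) := by
  intro a x _
  trivial

end Infra
section Min

variable {k V A : Type} [Field k] [Fintype V] {W : V → Type}
  [∀ v, AddCommGroup (W v)] [∀ v, Module k (W v)] [∀ v, FiniteDimensional k (W v)]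
  {s t : A → V} {φ : ∀ a : A, W (s a) →ₗ[k] W (t a)} (θ : V → ℤ) {α : V → ℤ}

lemma exists_min (hα : ∀ v, 0 < α v) (U0 : ∀ v, Submodule k (W v))
    (hne : ∃ v, U0 v ≠ ⊤) :
    ∃ F : ∀ v, Submodule k (W v), IsSubrep s t φ F ∧ (∀ v, U0 v ≤ F v) ∧
      (∃ v, F v ≠ U0 v) ∧
      (∀ T : ∀ v, Submodule k (W v), IsSubrep s t φ T → (∀ v, U0 v ≤ T v) →
        (∃ v, T v ≠ U0 v) →
        subqSlope θ α U0 F ≤ subqSlope θ α U0 T ∧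
        (subqSlope θ α U0 T ≤ subqSlope θ α U0 F →
          ∑ v, finrank k (T v) ≤ ∑ v, finrank k (F v))) := by
  classical
  set P : (∀ v, Submodule k (W v)) → Prop :=
    fun T => IsSubrep s t φ T ∧ (∀ v, U0 v ≤ T v) ∧ (∃ v, T v ≠ U0 v) with hP
  have hPtop : P (fun _ => ⊤) := by
    refine ⟨isSubrep_top, fun v => le_top, ?_⟩
    obtain ⟨v0, hv0⟩ := hne
    exact ⟨v0, fun h => hv0 h.symm⟩
  -- the set of slopes is finite
  set g : (V → ℕ) → ℚ := fun d =>
    (∑ v, (θ v : ℚ) * ((d v : ℚ) - (finrank k (U0 v) : ℚ))) /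
      (∑ v, (α v : ℚ) * ((d v : ℚ) - (finrank k (U0 v) : ℚ))) with hg
  have hgT : ∀ T : ∀ v, Submodule k (W v),
      g (fun v => finrank k (T v)) = subqSlope θ α U0 T := fun T => rfl
  set S : Set ℚ := {q | ∃ T, P T ∧ subqSlope θ α U0 T = q} with hS
  have hSfin : S.Finite := by
    have hD : (Set.univ.pi (fun v => Set.Iic (finrank k (W v)))).Finite :=
      Set.Finite.pi fun v => Set.finite_Iic _
    refine (hD.image g).subset ?_
    rintro q ⟨T, hT, rfl⟩
    exact ⟨fun v => finrank k (T v), fun v _ => Submodule.finrank_le _, hgT T⟩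
  have hSne : S.Nonempty := ⟨_, (fun _ => ⊤), hPtop, rfl⟩
  obtain ⟨μ, ⟨T0, hT0, hT0μ⟩, hμmin⟩ := Set.exists_min_image S id hSfin hSne
  -- among minimizers, maximize the total dimension
  set N : Set ℕ := {m | ∃ T, (P T ∧ subqSlope θ α U0 T = μ) ∧ ∑ v, finrank k (T v) = m}
    with hN
  have hNfin : N.Finite := by
    refine (Set.finite_Iic (∑ v, finrank k (W v))).subset ?_
    rintro m ⟨T, _, rfl⟩
    exact Finset.sum_le_sum fun v _ => Submodule.finrank_le _
  have hNne : N.Nonempty := ⟨_, T0, ⟨hT0, hT0μ⟩, rfl⟩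
  obtain ⟨m, ⟨F, ⟨hF, hFμ⟩, hFm⟩, hmmax⟩ := Set.exists_max_image N id hNfin hNne
  refine ⟨F, hF.1, hF.2.1, hF.2.2, fun T hT1 hT2 hT3 => ?_⟩
  have hTS : subqSlope θ α U0 T ∈ S := ⟨T, ⟨hT1, hT2, hT3⟩, rfl⟩
  have h1 : μ ≤ subqSlope θ α U0 T := hμmin _ hTS
  rw [hFμ]
  refine ⟨h1, fun h2 => ?_⟩
  have hTμ : subqSlope θ α U0 T = μ := le_antisymm h2 h1
  have : (∑ v, finrank k (T v)) ∈ N := ⟨T, ⟨⟨hT1, hT2, hT3⟩, hTμ⟩, rfl⟩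
  have := hmmax _ this
  simpa [hFm] using this

end Min
section Key

variable {k V A : Type} [Field k] [Fintype V] {W : V → Type}
  [∀ v, AddCommGroup (W v)] [∀ v, Module k (W v)] [∀ v, FiniteDimensional k (W v)]
  {s t : A → V} {φ : ∀ a : A, W (s a) →ₗ[k] W (t a)} {θ α : V → ℤ}

lemma chain_mono {n : ℕ} {U : ℕ → ∀ v, Submodule k (W v)}
    (hmono : ∀ i < n, ∀ v, U i v ≤ U (i + 1) v) :
    ∀ j ≤ n, ∀ i ≤ j, ∀ v, U i v ≤ U j v := by
  intro j
  induction j with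
  | zero => intro _ i hi v; obtain rfl : i = 0 := Nat.le_zero.mp hi; exact le_rfl
  | succ j ih =>
    intro hj i hi v
    by_cases hij : i = j + 1
    · subst hij; exact le_rfl
    · exact (ih (by omega) i (by omega) v).trans (hmono j (by omega) v)

lemma mu_strict {n : ℕ} {U : ℕ → ∀ v, Submodule k (W v)}
    (hsl : ∀ i, i + 1 < n → subqSlope θ α (U i) (U (i + 1)) <
      subqSlope θ α (U (i + 1)) (U (i + 2))) :
    ∀ j < n, 0 < j → subqSlope θ α (U 0) (U 1) < subqSlope θ α (U j) (U (j + 1)) := by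
  intro j
  induction j with
  | zero => omega
  | succ j ih =>
    intro hj _
    have h2 := hsl j hj
    rcases Nat.eq_zero_or_pos j with rfl | h
    · exact h2
    · exact (ih (by omega) h).trans h2

lemma first_step_min (hα : ∀ v, 0 < α v) {n : ℕ} {U : ℕ → ∀ v, Submodule k (W v)}
    (htop : U n = fun _ => ⊤)
    (hsub : ∀ i ≤ n, IsSubrep s t φ (U i))
    (hmono : ∀ i < n, ∀ v, U i v ≤ U (i + 1) v)
    (hss : ∀ i < n, QuotSemistable s t θ α φ (U i) (U (i + 1)))
    (hsl : ∀ i, i + 1 < n → subqSlope θ α (U i) (U (i + 1)) <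
      subqSlope θ α (U (i + 1)) (U (i + 2)))
    (hn : 0 < n) :
    ∀ T : ∀ v, Submodule k (W v), IsSubrep s t φ T → (∀ v, U 0 v ≤ T v) →
      (∃ v, T v ≠ U 0 v) →
      subqSlope θ α (U 0) (U 1) ≤ subqSlope θ α (U 0) T ∧
      (subqSlope θ α (U 0) T ≤ subqSlope θ α (U 0) (U 1) → ∀ v, T v ≤ U 1 v) := by
  set μ1 := subqSlope θ α (U 0) (U 1) with hμ1
  have key : ∀ i, i + 1 ≤ n → ∀ T : ∀ v, Submodule k (W v), IsSubrep s t φ T →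
      (∀ v, U 0 v ≤ T v) → (∀ v, T v ≤ U (i + 1) v) → (∃ v, T v ≠ U 0 v) →
      μ1 ≤ subqSlope θ α (U 0) T ∧
      (subqSlope θ α (U 0) T ≤ μ1 → ∀ v, T v ≤ U 1 v) := by
    intro i
    induction i with
    | zero =>
      intro h1 T hTsub hT0 hT1 hTne
      exact ⟨hss 0 hn T hTsub hT0 hT1 hTne, fun _ => hT1⟩
    | succ i ih =>
      intro h2 T hTsub hT0 hT1 hTne
      by_cases hTi : ∀ v, T v ≤ U (i + 1) v
      · exact ih (by omega) T hTsub hT0 hTi hTne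
      · push_neg at hTi
        obtain ⟨v0, hv0⟩ := hTi
        -- T is not contained in U (i+1); compare with the semistable quotient
        have hsupsub : IsSubrep s t φ (fun v => T v ⊔ U (i + 1) v) :=
          isSubrep_sup hTsub (hsub (i + 1) (by omega))
        have hinfsub : IsSubrep s t φ (fun v => T v ⊓ U (i + 1) v) :=
          isSubrep_inf hTsub (hsub (i + 1) (by omega))
        have hle1 : ∀ v, U (i + 1) v ≤ T v ⊔ U (i + 1) v := fun v => le_sup_right
        have hle2 : ∀ v, T v ⊔ U (i + 1) v ≤ U (i + 2) v :=
          fun v => sup_le (hT1 v) (hmono (i + 1) (by omega) v)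
        have hnesup : ∃ v, T v ⊔ U (i + 1) v ≠ U (i + 1) v := by
          refine ⟨v0, fun h => hv0 ?_⟩
          exact le_sup_left.trans h.le
        have hnesup' : ∃ v, U (i + 1) v ≠ T v ⊔ U (i + 1) v := by
          obtain ⟨v1, hv1⟩ := hnesup; exact ⟨v1, fun h => hv1 h.symm⟩
        clear hv0
        have hss1 := hss (i + 1) (by omega) (fun v => T v ⊔ U (i + 1) v)
          hsupsub hle1 hle2 hnesup
        have hmu : μ1 < subqSlope θ α (U (i + 1)) (U (i + 2)) :=
          mu_strict hsl (i + 1) (by omega) (by omega)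
        have hmusup : μ1 < subqSlope θ α (U (i + 1)) (fun v => T v ⊔ U (i + 1) v) :=
          lt_of_lt_of_le hmu hss1
        -- translate to the subquotient T / (T ⊓ U (i+1))
        have hslopeswap : subqSlope θ α (fun v => T v ⊓ U (i + 1) v) T
            = subqSlope θ α (U (i + 1)) (fun v => T v ⊔ U (i + 1) v) := by
          rw [subqSlope_eq, subqSlope_eq, thQ_inf_sup, thQ_inf_sup]
        have halsup : 0 < thQ α (U (i + 1)) (fun v => T v ⊔ U (i + 1) v) :=
          alQ_pos hα hle1 hnesup'
        have halinf : 0 < thQ α (fun v => T v ⊓ U (i + 1) v) T := by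
          rw [thQ_inf_sup α T (U (i + 1))]; exact halsup
        have hmuinf : μ1 < subqSlope θ α (fun v => T v ⊓ U (i + 1) v) T := by
          rw [hslopeswap]; exact hmusup
        have hexc : μ1 * thQ α (fun v => T v ⊓ U (i + 1) v) T
            < thQ θ (fun v => T v ⊓ U (i + 1) v) T := by
          rw [subqSlope_eq] at hmuinf
          exact (lt_div_iff₀ halinf).mp hmuinf
        by_cases hinf0 : ∀ v, T v ⊓ U (i + 1) v = U 0 v
        · have heq : (fun v => T v ⊓ U (i + 1) v) = U 0 := funext hinf0
          have hfin : μ1 < subqSlope θ α (U 0) T := by rw [← heq]; exact hmuinf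
          exact ⟨hfin.le, fun h => absurd (lt_of_lt_of_le hfin h) (lt_irrefl _)⟩
        · push_neg at hinf0
          have hinf0' : ∃ v, U 0 v ≠ T v ⊓ U (i + 1) v := by
            obtain ⟨v1, hv1⟩ := hinf0; exact ⟨v1, fun h => hv1 h.symm⟩
          have hU0le : ∀ v, U 0 v ≤ T v ⊓ U (i + 1) v := fun v =>
            le_inf (hT0 v) (chain_mono hmono (i + 1) (by omega) 0 (by omega) v)
          have hinfle : ∀ v, T v ⊓ U (i + 1) v ≤ U (i + 1) v := fun v => inf_le_right
          obtain ⟨hgeinf, -⟩ := ih (by omega) (fun v => T v ⊓ U (i + 1) v)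
            hinfsub hU0le hinfle hinf0
          have halinf0 : 0 < thQ α (U 0) (fun v => T v ⊓ U (i + 1) v) :=
            alQ_pos hα hU0le hinf0'
          have hgeinf' : μ1 * thQ α (U 0) (fun v => T v ⊓ U (i + 1) v)
              ≤ thQ θ (U 0) (fun v => T v ⊓ U (i + 1) v) := by
            rw [subqSlope_eq] at hgeinf
            exact (le_div_iff₀ halinf0).mp hgeinf
          have htadd := thQ_add θ (U 0) (fun v => T v ⊓ U (i + 1) v) T
          have haadd := thQ_add α (U 0) (fun v => T v ⊓ U (i + 1) v) T
          have halT : 0 < thQ α (U 0) T := by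
            rw [haadd]; exact add_pos halinf0 halinf
          have hfin : μ1 < subqSlope θ α (U 0) T := by
            rw [subqSlope_eq, lt_div_iff₀ halT, htadd, haadd]
            nlinarith [hgeinf', hexc]
          exact ⟨hfin.le, fun h => absurd (lt_of_lt_of_le hfin h) (lt_irrefl _)⟩
  intro T hTsub hT0 hTne
  have hT1 : ∀ v, T v ≤ U (n - 1 + 1) v := by
    intro v
    have hnn : n - 1 + 1 = n := by omega
    simp only [hnn, htop]
    exact le_top
  exact key (n - 1) (by omega) T hTsub hT0 hT1 hTne

end Key
section ExistsHN

variable {k V A : Type} [Field k] [Fintype V] {W : V → Type}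
  [∀ v, AddCommGroup (W v)] [∀ v, Module k (W v)] [∀ v, FiniteDimensional k (W v)]
  {s t : A → V} {φ : ∀ a : A, W (s a) →ₗ[k] W (t a)} {θ α : V → ℤ}

lemma hn_exists (hα : ∀ v, 0 < α v) :
    ∀ N : ℕ, ∀ U0 : ∀ v, Submodule k (W v), IsSubrep s t φ U0 →
      (∑ v, (finrank k (W v) - finrank k (U0 v))) ≤ N →
      ∃ (n : ℕ) (Uc : ℕ → ∀ v, Submodule k (W v)),
        Uc 0 = U0 ∧ (Uc n = fun _ => ⊤) ∧
        (∀ i ≤ n, IsSubrep s t φ (Uc i)) ∧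
        (∀ i < n, ∀ v, Uc i v ≤ Uc (i + 1) v) ∧
        (∀ i < n, ∃ v, Uc i v ≠ Uc (i + 1) v) ∧
        (∀ i < n, QuotSemistable s t θ α φ (Uc i) (Uc (i + 1))) ∧
        (∀ i, i + 1 < n → subqSlope θ α (Uc i) (Uc (i + 1)) <
          subqSlope θ α (Uc (i + 1)) (Uc (i + 2))) := by
  intro N
  induction N with
  | zero =>
    intro U0 hsub0 hN
    by_cases htop : ∀ v, U0 v = ⊤
    · exact ⟨0, fun _ => U0, rfl, funext htop, fun i _ => hsub0,
        fun i hi => absurd hi (by omega), fun i hi => absurd hi (by omega),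
        fun i hi => absurd hi (by omega), fun i hi => absurd hi (by omega)⟩
    · exfalso
      push_neg at htop
      obtain ⟨v0, hv0⟩ := htop
      have hlt : finrank k (U0 v0) < finrank k (W v0) := by
        have h1 := Submodule.finrank_lt_finrank_of_lt (lt_top_iff_ne_top.mpr hv0)
        rwa [finrank_top] at h1
      have hpos : 0 < ∑ v, (finrank k (W v) - finrank k (U0 v)) :=
        Finset.sum_pos' (fun v _ => Nat.zero_le _) ⟨v0, Finset.mem_univ _, by omega⟩
      omega
  | succ N ih =>
    intro U0 hsub0 hN
    by_cases htop : ∀ v, U0 v = ⊤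
    · exact ⟨0, fun _ => U0, rfl, funext htop, fun i _ => hsub0,
        fun i hi => absurd hi (by omega), fun i hi => absurd hi (by omega),
        fun i hi => absurd hi (by omega), fun i hi => absurd hi (by omega)⟩
    · push_neg at htop
      obtain ⟨F, hFsub, hFge, hFne, hFmin⟩ :=
        exists_min (s := s) (t := t) (φ := φ) θ hα U0 htop
      have hdim : ∑ v, (finrank k (W v) - finrank k (F v)) ≤ N := by
        have hlt : ∑ v, (finrank k (W v) - finrank k (F v))
            < ∑ v, (finrank k (W v) - finrank k (U0 v)) := by
          obtain ⟨v1, hv1⟩ := hFne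
          refine Finset.sum_lt_sum (fun v _ => ?_) ⟨v1, Finset.mem_univ _, ?_⟩
          · have := Submodule.finrank_mono (hFge v); omega
          · have h1 := Submodule.finrank_lt_finrank_of_lt
              (lt_of_le_of_ne (hFge v1) (Ne.symm hv1))
            have h2 := Submodule.finrank_le (F v1)
            rw [← finrank_top k (W v1)] at h2
            have h3 : finrank k (F v1) ≤ finrank k (W v1) := Submodule.finrank_le _
            omega
        omega
      obtain ⟨m, G, hG0, hGtop, hGsub, hGmono, hGne, hGss, hGsl⟩ := ih F hFsub hdim
      refine ⟨m + 1, fun i => match i with | 0 => U0 | (j + 1) => G j,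
        rfl, hGtop, ?_, ?_, ?_, ?_, ?_⟩
      · intro i hi
        rcases i with _ | j
        · exact hsub0
        · exact hGsub j (by omega)
      · intro i hi v
        rcases i with _ | j
        · show U0 v ≤ G 0 v
          rw [hG0]; exact hFge v
        · exact hGmono j (by omega) v
      · intro i hi
        rcases i with _ | j
        · show ∃ v, U0 v ≠ G 0 v
          rw [hG0]
          obtain ⟨v1, hv1⟩ := hFne
          exact ⟨v1, fun h => hv1 h.symm⟩
        · exact hGne j (by omega)
      · intro i hi
        rcases i with _ | j
        · show QuotSemistable s t θ α φ U0 (G 0)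
          rw [hG0]
          intro T hT1 hT2 hT3 hT4
          exact (hFmin T hT1 hT2 hT4).1
        · exact hGss j (by omega)
      · intro i hi
        rcases i with _ | j
        · show subqSlope θ α U0 (G 0) < subqSlope θ α (G 0) (G 1)
          rw [hG0]
          -- the junction inequality
          have hm : 0 < m := by omega
          have hFG1sub : IsSubrep s t φ (G 1) := hGsub 1 (by omega)
          have hFle : ∀ v, F v ≤ G 1 v := by
            intro v; have := hGmono 0 (by omega) v; rwa [hG0] at this
          have hFneG : ∃ v, F v ≠ G 1 v := by
            have := hGne 0 (by omega); rwa [hG0] at this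
          have hU0G1 : ∀ v, U0 v ≤ G 1 v := fun v => (hFge v).trans (hFle v)
          have hG1ne0 : ∃ v, G 1 v ≠ U0 v := by
            obtain ⟨v1, hv1⟩ := hFneG
            refine ⟨v1, fun h => hv1 ?_⟩
            exact le_antisymm (hFle v1) ((le_of_eq h).trans (hFge v1))
          have hb1 : 0 < thQ α U0 F := by
            refine alQ_pos hα hFge ?_
            obtain ⟨v1, hv1⟩ := hFne
            exact ⟨v1, fun h => hv1 h.symm⟩
          have hb2 : 0 < thQ α F (G 1) := alQ_pos hα hFle hFneG
          by_contra hcon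
          push_neg at hcon
          rw [subqSlope_eq, subqSlope_eq, div_le_div_iff₀ hb2 hb1] at hcon
          obtain ⟨hminle, hdimle⟩ := hFmin (G 1) hFG1sub hU0G1 hG1ne0
          have hsl1 : subqSlope θ α U0 (G 1)
              = (thQ θ U0 F + thQ θ F (G 1)) / (thQ α U0 F + thQ α F (G 1)) := by
            rw [subqSlope_eq, thQ_add θ U0 F (G 1), thQ_add α U0 F (G 1)]
          have hminle' : thQ θ U0 F * (thQ α U0 F + thQ α F (G 1))
              ≤ (thQ θ U0 F + thQ θ F (G 1)) * thQ α U0 F := by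
            rw [hsl1, subqSlope_eq, div_le_div_iff₀ hb1 (add_pos hb1 hb2)] at hminle
            exact hminle
          have hcross : thQ θ F (G 1) * thQ α U0 F = thQ θ U0 F * thQ α F (G 1) := by
            nlinarith
          have hle2 : subqSlope θ α U0 (G 1) ≤ subqSlope θ α U0 F := by
            rw [hsl1, subqSlope_eq, div_le_div_iff₀ (add_pos hb1 hb2) hb1]
            nlinarith
          have hdims := hdimle hle2
          have := dim_lt hFle hFneG
          omega
        · exact hGsl j (by omega)

end ExistsHN

section UniqHN

variable {k V A : Type} [Field k] [Fintype V] {W : V → Type}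
  [∀ v, AddCommGroup (W v)] [∀ v, Module k (W v)] [∀ v, FiniteDimensional k (W v)]
  {s t : A → V} {φ : ∀ a : A, W (s a) →ₗ[k] W (t a)} {θ α : V → ℤ}

lemma hn_unique (hα : ∀ v, 0 < α v) :
    ∀ n : ℕ, ∀ n' : ℕ, ∀ Uc Uc' : ℕ → ∀ v, Submodule k (W v),
      (Uc n = fun _ => ⊤) → (∀ i ≤ n, IsSubrep s t φ (Uc i)) →
      (∀ i < n, ∀ v, Uc i v ≤ Uc (i + 1) v) → (∀ i < n, ∃ v, Uc i v ≠ Uc (i + 1) v) →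
      (∀ i < n, QuotSemistable s t θ α φ (Uc i) (Uc (i + 1))) →
      (∀ i, i + 1 < n → subqSlope θ α (Uc i) (Uc (i + 1)) <
        subqSlope θ α (Uc (i + 1)) (Uc (i + 2))) →
      (Uc' n' = fun _ => ⊤) → (∀ i ≤ n', IsSubrep s t φ (Uc' i)) →
      (∀ i < n', ∀ v, Uc' i v ≤ Uc' (i + 1) v) → (∀ i < n', ∃ v, Uc' i v ≠ Uc' (i + 1) v) →
      (∀ i < n', QuotSemistable s t θ α φ (Uc' i) (Uc' (i + 1))) →
      (∀ i, i + 1 < n' → subqSlope θ α (Uc' i) (Uc' (i + 1)) <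
        subqSlope θ α (Uc' (i + 1)) (Uc' (i + 2))) →
      Uc 0 = Uc' 0 →
      n = n' ∧ ∀ i ≤ n, Uc i = Uc' i := by
  intro n
  induction n with
  | zero =>
    intro n' Uc Uc' htop hsub hmono hne hss hsl htop' hsub' hmono' hne' hss' hsl' h0
    rcases Nat.eq_zero_or_pos n' with rfl | hn'
    · refine ⟨rfl, fun i hi => ?_⟩
      obtain rfl : i = 0 := Nat.le_zero.mp hi
      exact h0
    · exfalso
      obtain ⟨v1, hv1⟩ := hne' 0 hn'
      apply hv1
      have hT : Uc' 0 v1 = ⊤ := by rw [← h0, htop]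
      have hle := hmono' 0 hn' v1
      rw [hT] at hle ⊢
      exact (top_le_iff.mp hle).symm
  | succ N ih =>
    intro n' Uc Uc' htop hsub hmono hne hss hsl htop' hsub' hmono' hne' hss' hsl' h0
    rcases Nat.eq_zero_or_pos n' with rfl | hn'
    · exfalso
      obtain ⟨v1, hv1⟩ := hne 0 (Nat.succ_pos N)
      apply hv1
      have hT : Uc 0 v1 = ⊤ := by rw [h0, htop']
      have hle := hmono 0 (Nat.succ_pos N) v1
      rw [hT] at hle ⊢
      exact (top_le_iff.mp hle).symm
    · have key1 := first_step_min hα htop hsub hmono hss hsl (Nat.succ_pos N)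
      have key2 := first_step_min hα htop' hsub' hmono' hss' hsl' hn'
      have hU'1sub := hsub' 1 hn'
      have hU1sub := hsub 1 (Nat.succ_pos N)
      have hge1 : ∀ v, Uc 0 v ≤ Uc' 1 v := fun v => by
        rw [h0]; exact hmono' 0 hn' v
      have hne1 : ∃ v, Uc' 1 v ≠ Uc 0 v := by
        obtain ⟨v1, hv1⟩ := hne' 0 hn'
        rw [h0]
        exact ⟨v1, fun h => hv1 h.symm⟩
      obtain ⟨ha1, hb1⟩ := key1 (Uc' 1) hU'1sub hge1 hne1
      have hge2 : ∀ v, Uc' 0 v ≤ Uc 1 v := fun v => by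
        rw [← h0]; exact hmono 0 (Nat.succ_pos N) v
      have hne2 : ∃ v, Uc 1 v ≠ Uc' 0 v := by
        obtain ⟨v1, hv1⟩ := hne 0 (Nat.succ_pos N)
        rw [← h0]
        exact ⟨v1, fun h => hv1 h.symm⟩
      obtain ⟨ha2, hb2⟩ := key2 (Uc 1) hU1sub hge2 hne2
      rw [← h0] at ha2 hb2
      have heq1 : ∀ v, Uc' 1 v ≤ Uc 1 v := hb1 ha2
      have heq2 : ∀ v, Uc 1 v ≤ Uc' 1 v := hb2 ha1
      have h1 : Uc 1 = Uc' 1 := funext fun v => le_antisymm (heq2 v) (heq1 v)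
      have hshift := ih (n' - 1) (fun i => Uc (i + 1)) (fun i => Uc' (i + 1))
        htop
        (fun i hi => hsub (i + 1) (by omega))
        (fun i hi v => hmono (i + 1) (by omega) v)
        (fun i hi => hne (i + 1) (by omega))
        (fun i hi => hss (i + 1) (by omega))
        (fun i hi => hsl (i + 1) (by omega))
        (by show Uc' (n' - 1 + 1) = _
            rw [show n' - 1 + 1 = n' by omega]
            exact htop')
        (fun i hi => hsub' (i + 1) (by omega))
        (fun i hi v => hmono' (i + 1) (by omega) v)
        (fun i hi => hne' (i + 1) (by omega))
        (fun i hi => hss' (i + 1) (by omega))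
        (fun i hi => hsl' (i + 1) (by omega))
        h1
      obtain ⟨hNM, hrest⟩ := hshift
      constructor
      · omega
      · intro i hi
        rcases i with _ | j
        · exact h0
        · exact hrest j (by omega)

end UniqHN


/-- Existence and uniqueness of the Harder–Narasimhan filtration of a
finite-dimensional quiver representation with respect to `(θ, α)`: a filtration
`0 = W⁽⁰⁾ ⊂ … ⊂ W⁽ⁿ⁾ = W` by subrepresentations whose subquotients are
`(θ,α)`-semistable with strictly increasing slopes. -/
theorem stmt_17 {k V A : Type} [Field k] [Fintype V] (s t : A → V)
    (W : V → Type) [∀ v, AddCommGroup (W v)] [∀ v, Module k (W v)]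
    [∀ v, FiniteDimensional k (W v)]
    (φ : ∀ a : A, W (s a) →ₗ[k] W (t a)) (θ α : V → ℤ) (hα : ∀ v, 0 < α v) :
    ∃ (n : ℕ) (U : ℕ → ∀ v, Submodule k (W v)),
      ((U 0 = fun _ => ⊥) ∧ (U n = fun _ => ⊤) ∧
        (∀ i ≤ n, IsSubrep s t φ (U i)) ∧
        (∀ i < n, ∀ v, U i v ≤ U (i + 1) v) ∧
        (∀ i < n, ∃ v, U i v ≠ U (i + 1) v) ∧
        (∀ i < n, QuotSemistable s t θ α φ (U i) (U (i + 1))) ∧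
        (∀ i, i + 1 < n → subqSlope θ α (U i) (U (i + 1)) <
          subqSlope θ α (U (i + 1)) (U (i + 2)))) ∧
      (∀ (n' : ℕ) (U' : ℕ → ∀ v, Submodule k (W v)),
        ((U' 0 = fun _ => ⊥) ∧ (U' n' = fun _ => ⊤) ∧
          (∀ i ≤ n', IsSubrep s t φ (U' i)) ∧
          (∀ i < n', ∀ v, U' i v ≤ U' (i + 1) v) ∧
          (∀ i < n', ∃ v, U' i v ≠ U' (i + 1) v) ∧
          (∀ i < n', QuotSemistable s t θ α φ (U' i) (U' (i + 1))) ∧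
          (∀ i, i + 1 < n' → subqSlope θ α (U' i) (U' (i + 1)) <
            subqSlope θ α (U' (i + 1)) (U' (i + 2)))) →
        n' = n ∧ ∀ i ≤ n, U' i = U i) := by
  obtain ⟨n, Uc, h0, htop, hsub, hmono, hne, hss, hsl⟩ :=
    hn_exists (s := s) (t := t) (φ := φ) (θ := θ) hα (∑ v, finrank k (W v))
      (fun _ => ⊥) isSubrep_bot (Finset.sum_le_sum fun v _ => Nat.sub_le _ _)
  refine ⟨n, Uc, ⟨h0, htop, hsub, hmono, hne, hss, hsl⟩, ?_⟩
  rintro n' U' ⟨h0', htop', hsub', hmono', hne', hss', hsl'⟩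
  have huniq := hn_unique hα n' n U' Uc htop' hsub' hmono' hne' hss' hsl'
    htop hsub hmono hne hss hsl (by rw [h0', h0])
  obtain ⟨rfl, hrest⟩ := huniq
  exact ⟨rfl, hrest⟩
end

section
/- Let τ = (P₁, …, P_s) be a tuple of rational polynomials with positive leading coefficients satisfying P₁ ≻ P₂ ≻ … ≻ P_s in Rudakov's order, let P = Σ P_i, and for m >> n >> 0 set θ = (−P(m), P(n)), α = (P(m), P(n)) and d_i := (P_i(n), P_i(m)). Then θ(d₁)/α(d₁) < θ(d₂)/α(d₂) < … < θ(d_s)/α(d_s) and Σ d_i = (P(n), P(m)); i.e., γ_{n,m}(τ) := (d₁, …, d_s) is a HN type for representations of the Kronecker quiver K_{n,m} of dimension (P(n), P(m)) with respect to (θ, α). -/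
open Polynomial Filter in
lemma aux_eval_pos (P : Polynomial ℚ) (h : 0 < P.leadingCoeff) :
    ∃ K : ℕ, ∀ x : ℕ, K ≤ x → 0 < P.eval (x : ℚ) := by
  by_cases hd : 0 < P.degree
  · have ht : Tendsto (fun x => eval x P) atTop atTop :=
      P.tendsto_atTop_of_leadingCoeff_nonneg hd h.le
    obtain ⟨a, ha⟩ := (ht.eventually_gt_atTop 0).exists_forall_of_atTop
    refine ⟨⌈a⌉₊, fun x hx => ha _ ?_⟩
    calc a ≤ (⌈a⌉₊ : ℚ) := Nat.le_ceil a
    _ ≤ (x : ℚ) := by exact_mod_cast hx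
  · have hP : P = Polynomial.C (P.coeff 0) := Polynomial.eq_C_of_degree_le_zero (not_lt.mp hd)
    have hnd : P.natDegree = 0 := Nat.le_zero.mp (Polynomial.natDegree_le_iff_degree_le.mpr (not_lt.mp hd))
    have : 0 < P.coeff 0 := by
      have := h; rwa [Polynomial.leadingCoeff, hnd] at this
    exact ⟨0, fun x _ => by rw [hP]; simpa using this⟩

/-- For a HN type `τ = (P₁,…,P_s)` of sheaves (`P₁ ≻ … ≻ P_s` in Rudakov's order)
with `P = Σ Pᵢ`, for `m ≫ n ≫ 0` the dimension vectors `dᵢ = (Pᵢ(n), Pᵢ(m))` have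
strictly increasing slopes `θ(dᵢ)/α(dᵢ)` (with `θ = (−P(m), P(n))`,
`α = (P(m), P(n))`) and sum to `(P(n), P(m))`; i.e. `γ_{n,m}(τ)` is a HN type for
Kronecker quiver representations of dimension `(P(n), P(m))`. -/
theorem stmt_19 (s : ℕ) (hs : 1 ≤ s) (P : Fin s → Polynomial ℚ)
    (hlead : ∀ i, 0 < (P i).leadingCoeff)
    (hchain : ∀ (i : ℕ) (h : i + 1 < s), ∃ N₀ : ℕ, ∀ n ≥ N₀, ∃ M ≥ n, ∀ m ≥ M,
      (P ⟨i, Nat.lt_of_succ_lt h⟩).eval (n : ℚ) / (P ⟨i, Nat.lt_of_succ_lt h⟩).eval (m : ℚ) >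
      (P ⟨i + 1, h⟩).eval (n : ℚ) / (P ⟨i + 1, h⟩).eval (m : ℚ)) :
    ∃ N₀ : ℕ, ∀ n ≥ N₀, ∃ M ≥ n, ∀ m ≥ M,
      (∀ i j : Fin s, i < j →
        (-(∑ l, P l).eval (m : ℚ) * (P i).eval (n : ℚ) +
              (∑ l, P l).eval (n : ℚ) * (P i).eval (m : ℚ)) /
            ((∑ l, P l).eval (m : ℚ) * (P i).eval (n : ℚ) +
              (∑ l, P l).eval (n : ℚ) * (P i).eval (m : ℚ)) <
        (-(∑ l, P l).eval (m : ℚ) * (P j).eval (n : ℚ) +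
              (∑ l, P l).eval (n : ℚ) * (P j).eval (m : ℚ)) /
            ((∑ l, P l).eval (m : ℚ) * (P j).eval (n : ℚ) +
              (∑ l, P l).eval (n : ℚ) * (P j).eval (m : ℚ))) ∧
      (∑ i, (P i).eval (n : ℚ) = (∑ l, P l).eval (n : ℚ) ∧
        ∑ i, (P i).eval (m : ℚ) = (∑ l, P l).eval (m : ℚ)) := by
  obtain ⟨s, rfl⟩ : ∃ s', s = s' + 1 := ⟨s - 1, (Nat.succ_pred_eq_of_pos hs).symm⟩
  choose N hN using hchain
  choose K hK using fun i : Fin (s + 1) => aux_eval_pos (P i) (hlead i)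
  refine ⟨(Finset.univ.sup K) ⊔ (Finset.range (s + 1)).sup
      (fun i => if h : i + 1 < s + 1 then N i h else 0), fun n hn => ?_⟩
  have hnK : ∀ i, K i ≤ n := fun i =>
    le_trans (le_trans (Finset.le_sup (Finset.mem_univ i)) le_sup_left) hn
  have hnN : ∀ (i : ℕ) (h : i + 1 < s + 1), N i h ≤ n := fun i h => by
    refine le_trans (le_trans ?_ le_sup_right) hn
    have := Finset.le_sup (f := fun i => if h : i + 1 < s + 1 then N i h else 0)
      (Finset.mem_range.mpr (Nat.lt_of_succ_lt_succ h |>.trans (Nat.lt_succ_self _)))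
    simpa [h] using this
  have hM' : ∀ (i : ℕ) (h : i + 1 < s + 1), ∃ M, n ≤ M ∧ ∀ m ≥ M,
      (P ⟨i, Nat.lt_of_succ_lt h⟩).eval (n : ℚ) / (P ⟨i, Nat.lt_of_succ_lt h⟩).eval (m : ℚ) >
      (P ⟨i + 1, h⟩).eval (n : ℚ) / (P ⟨i + 1, h⟩).eval (m : ℚ) := by
    intro i h
    obtain ⟨M, hM1, hM2⟩ := hN i h n (hnN i h)
    exact ⟨M, hM1, hM2⟩
  choose M hM1 hM2 using hM'
  refine ⟨n ⊔ (Finset.range (s + 1)).sup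
      (fun i => if h : i + 1 < s + 1 then M i h else 0), le_sup_left, fun m hm => ?_⟩
  have hmn : n ≤ m := le_trans le_sup_left hm
  have hmM : ∀ (i : ℕ) (h : i + 1 < s + 1), M i h ≤ m := fun i h => by
    refine le_trans (le_trans ?_ le_sup_right) hm
    have := Finset.le_sup (f := fun i => if h : i + 1 < s + 1 then M i h else 0)
      (Finset.mem_range.mpr (Nat.lt_of_succ_lt_succ h |>.trans (Nat.lt_succ_self _)))
    simpa [h] using this
  -- positivity
  have ha : ∀ i, 0 < (P i).eval (n : ℚ) := fun i => hK i n (hnK i)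
  have hb : ∀ i, 0 < (P i).eval (m : ℚ) := fun i => hK i m (le_trans (hnK i) hmn)
  have hA : 0 < (∑ l, P l).eval (m : ℚ) := by
    rw [Polynomial.eval_finset_sum]
    exact Finset.sum_pos (fun i _ => hb i) ⟨0, Finset.mem_univ 0⟩
  have hB : 0 < (∑ l, P l).eval (n : ℚ) := by
    rw [Polynomial.eval_finset_sum]
    exact Finset.sum_pos (fun i _ => ha i) ⟨0, Finset.mem_univ 0⟩
  -- strict antitonicity of ratios
  have hanti : StrictAnti (fun i : Fin (s + 1) => (P i).eval (n : ℚ) / (P i).eval (m : ℚ)) := by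
    rw [Fin.strictAnti_iff_succ_lt]
    intro i
    have h : (i : ℕ) + 1 < s + 1 := Nat.succ_lt_succ i.isLt
    have := hM2 i h m (hmM i h)
    have e1 : i.castSucc = (⟨(i : ℕ), Nat.lt_of_succ_lt h⟩ : Fin (s + 1)) := rfl
    have e2 : i.succ = (⟨(i : ℕ) + 1, h⟩ : Fin (s + 1)) := rfl
    rw [e1, e2]
    exact this
  refine ⟨fun i j hij => ?_, by rw [Polynomial.eval_finset_sum],
    by rw [Polynomial.eval_finset_sum]⟩
  have hratio := hanti hij
  have key : (P j).eval (n : ℚ) * (P i).eval (m : ℚ) <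
      (P i).eval (n : ℚ) * (P j).eval (m : ℚ) :=
    (div_lt_div_iff₀ (hb j) (hb i)).mp hratio
  set A := (∑ l, P l).eval (m : ℚ)
  set B := (∑ l, P l).eval (n : ℚ)
  set ai := (P i).eval (n : ℚ)
  set bi := (P i).eval (m : ℚ)
  set aj := (P j).eval (n : ℚ)
  set bj := (P j).eval (m : ℚ)
  have hdi : 0 < A * ai + B * bi := add_pos (mul_pos hA (ha i)) (mul_pos hB (hb i))
  have hdj : 0 < A * aj + B * bj := add_pos (mul_pos hA (ha j)) (mul_pos hB (hb j))
  rw [div_lt_div_iff₀ hdi hdj]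
  nlinarith [mul_pos hA hB, key]
end
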